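/- arXiv:0802.0954 — 3 statements merged into one kernel-verified Lean document; each statement's English description precedes it below -/
import Mathlib

section
/- Let (C, σ) be a category with involution such that C has all small limits and all small colimits. Then the skewed category σ # C has all small limits and all small colimits. -/
open CategoryTheory

universe v u v₂ u₂ v₃ u₃

namespace SkewTest

variable {C : Type u} [Category.{v} C]

/-- For an involution `σ` (a functor with `σ ⋙ σ = 𝟭 C`), `σ.obj (σ.obj X) = X`. -/
theorem sq_obj (σ : C ⥤ C) (hσ : σ ⋙ σ = 𝟭 C) (X : C) : σ.obj (σ.obj X) = X :=
  Functor.congr_obj hσ X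

/-- Objects of the skewed category of a category with involution `(C, σ)`:
maps of order two `w : A ⟶ σ A`. -/
structure SkewObj (σ : C ⥤ C) (hσ : σ ⋙ σ = 𝟭 C) where
  pt : C
  tw : pt ⟶ σ.obj pt
  order_two : σ.map tw ≫ eqToHom (sq_obj σ hσ pt) ≫ tw = 𝟙 (σ.obj pt)

/-- Morphisms of the skewed category. -/
@[ext]
structure SkewHom {σ : C ⥤ C} {hσ : σ ⋙ σ = 𝟭 C} (X Y : SkewObj σ hσ) where
  hom : X.pt ⟶ Y.pt
  comm : hom ≫ Y.tw = X.tw ≫ σ.map hom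

instance skewCategory (σ : C ⥤ C) (hσ : σ ⋙ σ = 𝟭 C) : Category (SkewObj σ hσ) where
  Hom := SkewHom
  id X := ⟨𝟙 X.pt, by simp⟩
  comp f g := ⟨f.hom ≫ g.hom, by
    rw [Category.assoc, g.comm, ← Category.assoc, f.comm, Category.assoc, ← Functor.map_comp]⟩
  id_comp f := SkewHom.ext (Category.id_comp f.hom)
  comp_id f := SkewHom.ext (Category.comp_id f.hom)
  assoc f g h := SkewHom.ext (Category.assoc f.hom g.hom h.hom)

@[simp] theorem SkewHom.id_hom {σ : C ⥤ C} {hσ : σ ⋙ σ = 𝟭 C} (X : SkewObj σ hσ) :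
    SkewHom.hom (𝟙 X) = 𝟙 X.pt := rfl

@[simp] theorem SkewHom.comp_hom {σ : C ⥤ C} {hσ : σ ⋙ σ = 𝟭 C} {X Y Z : SkewObj σ hσ}
    (f : X ⟶ Y) (g : Y ⟶ Z) : SkewHom.hom (f ≫ g) = f.hom ≫ g.hom := rfl

/-- The projection functor `ℙ : σ # C ⥤ C`. -/
def skewProj (σ : C ⥤ C) (hσ : σ ⋙ σ = 𝟭 C) : SkewObj σ hσ ⥤ C where
  obj X := X.pt
  map f := f.hom

end SkewTest

namespace SkewTestAux

open SkewTest CategoryTheory.Limits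

universe w' w

variable {C : Type u} [Category.{v} C] (σ : C ⥤ C) (hσ : σ ⋙ σ = 𝟭 C)

theorem sq_map {X Y : C} (f : X ⟶ Y) :
    σ.map (σ.map f) =
      eqToHom (sq_obj σ hσ X) ≫ f ≫ eqToHom (sq_obj σ hσ Y).symm :=
  Functor.congr_hom hσ f

theorem eqToHom_comp {X Y : C} (f : X ⟶ Y) :
    eqToHom (sq_obj σ hσ X) ≫ f = σ.map (σ.map f) ≫ eqToHom (sq_obj σ hσ Y) := by
  rw [sq_map σ hσ f]; simp

include hσ in
/-- `σ` is an equivalence. -/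
theorem isEquiv : σ.IsEquivalence :=
  (CategoryTheory.Equivalence.mk σ σ (eqToIso hσ.symm) (eqToIso hσ)).isEquivalence_functor

section Limits

variable {J : Type w} [Category.{w'} J] (F : J ⥤ SkewObj σ hσ)
variable (c : Cone (F ⋙ skewProj σ hσ)) (hc : IsLimit c)
  (hσc : IsLimit (σ.mapCone c))

/-- The cone over `(F ⋙ ℙ) ⋙ σ` with apex `c.pt` given by the twists. -/
@[simps]
def twistCone : Cone ((F ⋙ skewProj σ hσ) ⋙ σ) where
  pt := c.pt
  π :=
    { app := fun j => c.π.app j ≫ (F.obj j).tw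
      naturality := fun j j' u => by
        have h := (F.map u).comm
        have hw : c.π.app j ≫ (F.map u).hom = c.π.app j' := c.w u
        dsimp [skewProj] at h ⊢
        rw [Category.id_comp, Category.assoc, ← h, ← Category.assoc]
        exact (congrArg (· ≫ (F.obj j').tw) hw).symm }

/-- The twist on the limit point. -/
noncomputable def limTw : c.pt ⟶ σ.obj c.pt := hσc.lift (twistCone σ hσ F c)

theorem limTw_fac (j : J) :
    limTw σ hσ F c hσc ≫ σ.map (c.π.app j) = c.π.app j ≫ (F.obj j).tw :=
  hσc.fac (twistCone σ hσ F c) j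

/-- The limit object in the skewed category. -/
noncomputable def skewLimObj : SkewObj σ hσ where
  pt := c.pt
  tw := limTw σ hσ F c hσc
  order_two := by
    apply hσc.hom_ext
    intro j
    dsimp [Functor.mapCone]
    simp only [Category.id_comp, Category.assoc]
    rw [limTw_fac σ hσ F c hσc j]
    have key : ∀ (p : c.pt ⟶ (F.obj j).pt), limTw σ hσ F c hσc ≫ σ.map p = p ≫ (F.obj j).tw →
        σ.map (limTw σ hσ F c hσc) ≫ eqToHom (sq_obj σ hσ c.pt) ≫ p ≫ (F.obj j).tw = σ.map p := by
      intro p hp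
      rw [← Category.assoc (eqToHom _), eqToHom_comp σ hσ, Category.assoc,
        ← Category.assoc (σ.map _), ← σ.map_comp, hp, σ.map_comp, Category.assoc,
        (F.obj j).order_two, Category.comp_id]
    exact key _ (limTw_fac σ hσ F c hσc j)

/-- The limit cone in the skewed category. -/
noncomputable def skewLimCone : Cone F where
  pt := skewLimObj σ hσ F c hσc
  π :=
    { app := fun j => ⟨c.π.app j, (limTw_fac σ hσ F c hσc j).symm⟩
      naturality := fun j j' u => by
        apply SkewHom.ext
        have := c.w u
        dsimp [skewLimObj] at this ⊢
        exact (Category.id_comp _).trans this.symm }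

/-- The limit cone is a limit. -/
noncomputable def skewLimConeIsLimit : IsLimit (skewLimCone σ hσ F c hσc) where
  lift s :=
    { hom := hc.lift ((skewProj σ hσ).mapCone s)
      comm := by
        apply hσc.hom_ext
        intro j
        dsimp [skewLimCone, skewLimObj, Functor.mapCone]
        simp only [Category.assoc]
        have key : ∀ (L : s.pt.pt ⟶ c.pt) (p : c.pt ⟶ (F.obj j).pt),
            limTw σ hσ F c hσc ≫ σ.map p = p ≫ (F.obj j).tw → L ≫ p = (s.π.app j).hom →
            (L ≫ limTw σ hσ F c hσc) ≫ σ.map p = s.pt.tw ≫ σ.map L ≫ σ.map p := by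
          intro L p hp hL
          rw [Category.assoc, hp, ← Category.assoc, hL, ← σ.map_comp, hL]
          exact (s.π.app j).comm
        exact key _ _ (limTw_fac σ hσ F c hσc j)
          (hc.fac ((Cones.functoriality F (skewProj σ hσ)).obj s) j) }
  fac s j := SkewHom.ext (hc.fac ((skewProj σ hσ).mapCone s) j)
  uniq s m hm := SkewHom.ext <| hc.uniq ((skewProj σ hσ).mapCone s) m.hom
    fun j => congrArg SkewHom.hom (hm j)

end Limits

section Colimits

variable {J : Type w} [Category.{w'} J] (F : J ⥤ SkewObj σ hσ)
variable (c : Cocone (F ⋙ skewProj σ hσ)) (hc : IsColimit c)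
  (hσc : IsColimit (σ.mapCocone c))

/-- The cocone over `F ⋙ ℙ` with apex `σ.obj c.pt` given by the twists. -/
@[simps]
def twistCocone : Cocone (F ⋙ skewProj σ hσ) where
  pt := σ.obj c.pt
  ι :=
    { app := fun j => (F.obj j).tw ≫ σ.map (c.ι.app j)
      naturality := fun j j' u => by
        have h := (F.map u).comm
        have hw : (F.map u).hom ≫ c.ι.app j' = c.ι.app j := c.w u
        dsimp [skewProj] at h ⊢
        rw [Category.comp_id, ← Category.assoc, h, Category.assoc,
          ← σ.map_comp, hw] }

/-- The twist on the colimit point. -/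
noncomputable def colimTw : c.pt ⟶ σ.obj c.pt := hc.desc (twistCocone σ hσ F c)

theorem colimTw_fac (j : J) :
    c.ι.app j ≫ colimTw σ hσ F c hc = (F.obj j).tw ≫ σ.map (c.ι.app j) :=
  hc.fac (twistCocone σ hσ F c) j

/-- The colimit object in the skewed category. -/
noncomputable def skewColimObj : SkewObj σ hσ where
  pt := c.pt
  tw := colimTw σ hσ F c hc
  order_two := by
    apply hσc.hom_ext
    intro j
    dsimp [Functor.mapCocone]
    simp only [Category.comp_id, Category.assoc]
    have key : ∀ (p : (F.obj j).pt ⟶ c.pt), p ≫ colimTw σ hσ F c hc = (F.obj j).tw ≫ σ.map p →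
        σ.map p ≫ σ.map (colimTw σ hσ F c hc) ≫ eqToHom (sq_obj σ hσ c.pt) ≫ colimTw σ hσ F c hc
          = σ.map p := by
      intro p hp
      rw [← Category.assoc (σ.map p), ← σ.map_comp, hp, σ.map_comp, Category.assoc,
        ← Category.assoc (σ.map (σ.map p)), ← eqToHom_comp σ hσ, Category.assoc, hp,
        ← Category.assoc (eqToHom _), ← Category.assoc (σ.map (F.obj j).tw),
        (F.obj j).order_two, Category.id_comp]
    exact key _ (colimTw_fac σ hσ F c hc j)

/-- The colimit cocone in the skewed category. -/
noncomputable def skewColimCocone : Cocone F where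
  pt := skewColimObj σ hσ F c hc hσc
  ι :=
    { app := fun j => ⟨c.ι.app j, colimTw_fac σ hσ F c hc j⟩
      naturality := fun j j' u => by
        apply SkewHom.ext
        have := c.w u
        dsimp [skewColimObj] at this ⊢
        exact this.trans (Category.comp_id _).symm }

/-- The colimit cocone is a colimit. -/
noncomputable def skewColimCoconeIsColimit :
    IsColimit (skewColimCocone σ hσ F c hc hσc) where
  desc s :=
    { hom := hc.desc ((skewProj σ hσ).mapCocone s)
      comm := by
        apply hc.hom_ext
        intro j
        dsimp [skewColimCocone, skewColimObj, Functor.mapCocone]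
        have key : ∀ (D : c.pt ⟶ s.pt.pt) (p : (F.obj j).pt ⟶ c.pt),
            p ≫ colimTw σ hσ F c hc = (F.obj j).tw ≫ σ.map p → p ≫ D = (s.ι.app j).hom →
            p ≫ D ≫ s.pt.tw = p ≫ colimTw σ hσ F c hc ≫ σ.map D := by
          intro D p hp hD
          have hs : (s.ι.app j).hom ≫ s.pt.tw = (F.obj j).tw ≫ σ.map (s.ι.app j).hom :=
            (s.ι.app j).comm
          rw [← Category.assoc, hD, hs, ← Category.assoc p, hp, Category.assoc,
            ← σ.map_comp, hD]
        exact key _ _ (colimTw_fac σ hσ F c hc j)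
          (hc.fac ((Cocones.functoriality F (skewProj σ hσ)).obj s) j) }
  fac s j := SkewHom.ext (hc.fac ((skewProj σ hσ).mapCocone s) j)
  uniq s m hm := SkewHom.ext <| hc.uniq ((skewProj σ hσ).mapCocone s) m.hom
    fun j => congrArg SkewHom.hom (hm j)

end Colimits

end SkewTestAux

open SkewTest CategoryTheory.Limits in
/-- **Statement 4.** If `(C, σ)` is a category with involution and `C` has all small limits
and all small colimits, then the skewed category `σ # C` has all small limits and all
small colimits. -/
theorem skewed_hasLimits_hasColimits {C : Type u} [Category.{v} C]
    (σ : C ⥤ C) (hσ : σ ⋙ σ = 𝟭 C) [HasLimits C] [HasColimits C] :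
    HasLimits (SkewObj σ hσ) ∧ HasColimits (SkewObj σ hσ) := by
  haveI : σ.IsEquivalence := SkewTestAux.isEquiv σ hσ
  constructor
  · constructor
    intro J instJ
    constructor
    intro F
    have c := limit.cone (F ⋙ skewProj σ hσ)
    have hc := limit.isLimit (F ⋙ skewProj σ hσ)
    have hσc : IsLimit (σ.mapCone (limit.cone (F ⋙ skewProj σ hσ))) :=
      isLimitOfPreserves σ hc
    exact HasLimit.mk ⟨_, SkewTestAux.skewLimConeIsLimit σ hσ F _ hc hσc⟩
  · constructor
    intro J instJ
    constructor
    intro F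
    have hc := colimit.isColimit (F ⋙ skewProj σ hσ)
    have hσc : IsColimit (σ.mapCocone (colimit.cocone (F ⋙ skewProj σ hσ))) :=
      isColimitOfPreserves σ hc
    exact HasColimit.mk ⟨_, SkewTestAux.skewColimCoconeIsColimit σ hσ F _ hc hσc⟩
end

section
/- Let (F, G, η, ε) be an adjunction (F left adjoint to G) between categories with involution (C, σ) and (D, τ). Then there exists a natural transformation α : Fσ → τF with τα ∘ ασ = id_F if and only if there exists a natural transformation β : Gτ → σG with σβ ∘ βτ = id_G. -/
open CategoryTheory

universe v u v₂ u₂ v₃ u₃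

namespace SkewTransfer

open SkewTest

variable {C : Type u} [Category.{v} C] {D : Type u₂} [Category.{v₂} D]

theorem mapmap (σ : C ⥤ C) (hσ : σ ⋙ σ = 𝟭 C) {X Y : C} (f : X ⟶ Y) :
    σ.map (σ.map f) =
      eqToHom (sq_obj σ hσ X) ≫ f ≫ eqToHom (sq_obj σ hσ Y).symm := by
  simpa using Functor.congr_hom hσ f

section Fwd

variable (σ : C ⥤ C) (τ : D ⥤ D) (hτ : τ ⋙ τ = 𝟭 D)
  (F : C ⥤ D) (G : D ⥤ C) (adj : F ⊣ G) (α : σ ⋙ F ⟶ F ⋙ τ)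

/-- `φ_B : FσGτB ⟶ B`. -/
def phi (B : D) : F.obj (σ.obj (G.obj (τ.obj B))) ⟶ B :=
  α.app (G.obj (τ.obj B)) ≫ τ.map (adj.counit.app (τ.obj B)) ≫ eqToHom (sq_obj τ hτ B)

theorem phi_nat {B B' : D} (f : B ⟶ B') :
    F.map (σ.map (G.map (τ.map f))) ≫ phi σ τ hτ F G adj α B' = phi σ τ hτ F G adj α B ≫ f := by
  dsimp [phi]
  have h1 := α.naturality (G.map (τ.map f))
  dsimp at h1
  slice_lhs 1 2 => rw [h1]
  have h2 := adj.counit.naturality (τ.map f)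
  dsimp at h2
  slice_lhs 2 3 => rw [← Functor.map_comp, h2, Functor.map_comp]
  rw [mapmap τ hτ f]
  simp

/-- `ψ_B : σGτB ⟶ GB`, the adjoint transpose of `φ_B`. -/
def psi (B : D) : σ.obj (G.obj (τ.obj B)) ⟶ G.obj B :=
  adj.unit.app _ ≫ G.map (phi σ τ hτ F G adj α B)

theorem psi_nat {B B' : D} (f : B ⟶ B') :
    σ.map (G.map (τ.map f)) ≫ psi σ τ hτ F G adj α B' = psi σ τ hτ F G adj α B ≫ G.map f := by
  dsimp only [psi]
  have h1 := adj.unit.naturality (σ.map (G.map (τ.map f)))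
  dsimp at h1
  slice_lhs 1 2 => rw [h1]
  rw [Category.assoc, ← Functor.map_comp, phi_nat, Functor.map_comp]
  simp

variable (hσ : σ ⋙ σ = 𝟭 C)

/-- The induced `β : τ ⋙ G ⟶ G ⋙ σ`. -/
def beta : τ ⋙ G ⟶ G ⋙ σ where
  app B := eqToHom (sq_obj σ hσ (G.obj (τ.obj B))).symm ≫ σ.map (psi σ τ hτ F G adj α B)
  naturality {B B'} f := by
    dsimp
    have e2 := congrArg (fun z => σ.map z) (psi_nat σ τ hτ F G adj α f)
    try dsimp at e2
    rw [Functor.map_comp, Functor.map_comp, mapmap σ hσ (G.map (τ.map f))] at e2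
    simp only [Category.assoc] at e2 ⊢
    rw [← e2]
    simp

theorem hkey (hα : ∀ A : C,
      eqToHom (congrArg F.obj (sq_obj σ hσ A)).symm ≫ α.app (σ.obj A) ≫ τ.map (α.app A) ≫
        eqToHom (sq_obj τ hτ (F.obj A)) = 𝟙 (F.obj A)) (A : C) :
    α.app (σ.obj A) ≫ τ.map (α.app A) =
      eqToHom (congrArg F.obj (sq_obj σ hσ A)) ≫ eqToHom (sq_obj τ hτ (F.obj A)).symm := by
  have h := congrArg (fun z =>
    eqToHom (congrArg F.obj (sq_obj σ hσ A)) ≫ z ≫ eqToHom (sq_obj τ hτ (F.obj A)).symm) (hα A)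
  simpa using h

set_option maxHeartbeats 1600000 in
theorem phi_psi (hα : ∀ A : C,
      eqToHom (congrArg F.obj (sq_obj σ hσ A)).symm ≫ α.app (σ.obj A) ≫ τ.map (α.app A) ≫
        eqToHom (sq_obj τ hτ (F.obj A)) = 𝟙 (F.obj A)) (B : D) :
    F.map (σ.map (psi σ τ hτ F G adj α (τ.obj B))) ≫ phi σ τ hτ F G adj α B =
      eqToHom (congrArg F.obj ((sq_obj σ hσ (G.obj (τ.obj (τ.obj B)))).trans
        (congrArg G.obj (sq_obj τ hτ B)))) ≫ adj.counit.app B := by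
  conv_lhs => rw [show psi σ τ hτ F G adj α (τ.obj B) =
    adj.unit.app _ ≫ G.map (phi σ τ hτ F G adj α (τ.obj B)) from rfl]
  rw [show phi σ τ hτ F G adj α B =
    α.app _ ≫ τ.map (adj.counit.app (τ.obj B)) ≫ eqToHom (sq_obj τ hτ B) from rfl]
  rw [Functor.map_comp σ, Functor.map_comp F]
  have h1 := α.naturality (G.map (phi σ τ hτ F G adj α (τ.obj B)))
  dsimp at h1
  slice_lhs 2 3 => rw [h1]
  have h2 := α.naturality (adj.unit.app (σ.obj (G.obj (τ.obj (τ.obj B)))))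
  dsimp at h2
  slice_lhs 1 2 => rw [h2]
  have h3 := adj.counit.naturality (phi σ τ hτ F G adj α (τ.obj B))
  dsimp at h3
  slice_lhs 3 4 => rw [← Functor.map_comp, h3, Functor.map_comp]
  slice_lhs 2 3 => rw [← Functor.map_comp, adj.left_triangle_components, CategoryTheory.Functor.map_id]
  rw [Category.id_comp]
  -- now : α_{σGττB} ≫ τφτB ≫ eq
  rw [show phi σ τ hτ F G adj α (τ.obj B) =
    α.app _ ≫ τ.map (adj.counit.app (τ.obj (τ.obj B))) ≫ eqToHom (sq_obj τ hτ (τ.obj B)) from rfl]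
  rw [Functor.map_comp τ, Functor.map_comp τ]
  slice_lhs 1 2 => rw [hkey σ τ hτ F α hσ hα]
  rw [mapmap τ hτ]
  have h5 : adj.counit.app (τ.obj (τ.obj B)) ≫ eqToHom (sq_obj τ hτ B) =
      eqToHom (congrArg (fun X => F.obj (G.obj X)) (sq_obj τ hτ B)) ≫ adj.counit.app B := by
    have h := adj.counit.naturality (eqToHom (sq_obj τ hτ B))
    dsimp at h
    simpa [eqToHom_map] using h.symm
  simp only [Category.assoc, eqToHom_map, eqToHom_trans, eqToHom_trans_assoc]
  rw [h5]
  simp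

theorem beta_cond (hα : ∀ A : C,
      eqToHom (congrArg F.obj (sq_obj σ hσ A)).symm ≫ α.app (σ.obj A) ≫ τ.map (α.app A) ≫
        eqToHom (sq_obj τ hτ (F.obj A)) = 𝟙 (F.obj A)) (B : D) :
    eqToHom (congrArg G.obj (sq_obj τ hτ B)).symm ≫ (beta σ τ hτ F G adj α hσ).app (τ.obj B) ≫
        σ.map ((beta σ τ hτ F G adj α hσ).app B) ≫ eqToHom (sq_obj σ hσ (G.obj B)) =
      𝟙 (G.obj B) := by
  dsimp [beta]
  have key : σ.map (psi σ τ hτ F G adj α (τ.obj B)) ≫ psi σ τ hτ F G adj α B =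
      eqToHom ((sq_obj σ hσ (G.obj (τ.obj (τ.obj B)))).trans (congrArg G.obj (sq_obj τ hτ B))) := by
    conv_lhs => rw [show psi σ τ hτ F G adj α B =
      adj.unit.app _ ≫ G.map (phi σ τ hτ F G adj α B) from rfl]
    have h1 := adj.unit.naturality (σ.map (psi σ τ hτ F G adj α (τ.obj B)))
    dsimp at h1
    slice_lhs 1 2 => rw [h1]
    rw [Category.assoc, ← Functor.map_comp, phi_psi σ τ hτ F G adj α hσ hα B,
      Functor.map_comp, eqToHom_map]
    have h4 := adj.unit.naturality (eqToHom ((sq_obj σ hσ (G.obj (τ.obj (τ.obj B)))).trans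
      (congrArg G.obj (sq_obj τ hτ B))))
    dsimp at h4
    simp only [eqToHom_map] at h4
    slice_lhs 1 2 => rw [← h4]
    simp
  rw [Functor.map_comp, mapmap σ hσ (psi σ τ hτ F G adj α B), eqToHom_map]
  simp only [Category.assoc, eqToHom_trans, eqToHom_trans_assoc, eqToHom_refl,
    Category.id_comp, Category.comp_id]
  slice_lhs 2 3 => rw [key]
  simp

end Fwd

section Bwd

variable (σ : C ⥤ C) (hσ : σ ⋙ σ = 𝟭 C) (τ : D ⥤ D) (hτ : τ ⋙ τ = 𝟭 D)
  (F : C ⥤ D) (G : D ⥤ C) (adj : F ⊣ G) (β : τ ⋙ G ⟶ G ⋙ σ)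

/-- `tilde_B : σGB ⟶ GτB`, the (two-sided) inverse of `β`. -/
def tilde (B : D) : σ.obj (G.obj B) ⟶ G.obj (τ.obj B) :=
  eqToHom (congrArg σ.obj (congrArg G.obj (sq_obj τ hτ B).symm)) ≫
    σ.map (β.app (τ.obj B)) ≫ eqToHom (sq_obj σ hσ (G.obj (τ.obj B)))

theorem tilde_nat {B B' : D} (g : B ⟶ B') :
    σ.map (G.map g) ≫ tilde σ hσ τ hτ G β B' = tilde σ hσ τ hτ G β B ≫ G.map (τ.map g) := by
  dsimp only [tilde]
  have e2 := congrArg (fun z => σ.map z) (β.naturality (τ.map g))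
  dsimp at e2
  rw [Functor.map_comp, Functor.map_comp, mapmap σ hσ (G.map (τ.map g))] at e2
  -- e2 : σ(G(ττg)) ≫ σβ_{τB'} = σβ_{τB} ≫ eq ≫ Gτg ≫ eq
  have e1 : σ.map (G.map (τ.map (τ.map g))) =
      eqToHom (congrArg σ.obj (congrArg G.obj (sq_obj τ hτ B))) ≫ σ.map (G.map g) ≫
        eqToHom (congrArg σ.obj (congrArg G.obj (sq_obj τ hτ B').symm)) := by
    rw [mapmap τ hτ g]
    simp [eqToHom_map]
  rw [e1] at e2
  simp only [Category.assoc] at e2 ⊢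
  have e3 := congrArg (fun z =>
    eqToHom (congrArg σ.obj (congrArg G.obj (sq_obj τ hτ B).symm)) ≫ z) e2
  simp only [eqToHom_trans_assoc, eqToHom_refl, Category.id_comp] at e3
  have e4 := congrArg (fun z => z ≫ eqToHom (sq_obj σ hσ (G.obj (τ.obj B')))) e3
  simp only [Category.assoc] at e4
  rw [e4]
  simp

theorem beta_tilde (hβ : ∀ B : D,
      eqToHom (congrArg G.obj (sq_obj τ hτ B)).symm ≫ β.app (τ.obj B) ≫ σ.map (β.app B) ≫
        eqToHom (sq_obj σ hσ (G.obj B)) = 𝟙 (G.obj B)) (B : D) :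
    β.app B ≫ tilde σ hσ τ hτ G β B = 𝟙 (G.obj (τ.obj B)) := by
  have h := hβ (τ.obj B)
  have hnat := β.naturality (eqToHom (sq_obj τ hτ B))
  dsimp at hnat
  simp only [eqToHom_map] at hnat
  -- hnat : eqToHom ≫ β.app B = β.app (ττB) ≫ eqToHom
  have hsub := congrArg (fun z =>
    z ≫ eqToHom (congrArg σ.obj (congrArg G.obj (sq_obj τ hτ B).symm))) hnat
  simp only [Category.assoc, eqToHom_trans, eqToHom_refl, Category.comp_id] at hsub
  rw [← hsub] at h
  dsimp only [tilde]
  simp only [Category.assoc, eqToHom_trans_assoc, eqToHom_refl, Category.id_comp] at h ⊢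
  exact h

/-- `χ_A : σA ⟶ GτFA`. -/
def chi (A : C) : σ.obj A ⟶ G.obj (τ.obj (F.obj A)) :=
  σ.map (adj.unit.app A) ≫ tilde σ hσ τ hτ G β (F.obj A)

theorem chi_nat {A A' : C} (f : A ⟶ A') :
    σ.map f ≫ chi σ hσ τ hτ F G adj β A' = chi σ hσ τ hτ F G adj β A ≫ G.map (τ.map (F.map f)) := by
  dsimp only [chi]
  have h1 := adj.unit.naturality f
  dsimp at h1
  rw [← Category.assoc, ← Functor.map_comp, h1, Functor.map_comp, Category.assoc,
    tilde_nat σ hσ τ hτ G β (F.map f), ← Category.assoc]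

/-- The induced `α : σ ⋙ F ⟶ F ⋙ τ`. -/
def alphaOf : σ ⋙ F ⟶ F ⋙ τ where
  app A := F.map (chi σ hσ τ hτ F G adj β A) ≫ adj.counit.app (τ.obj (F.obj A))
  naturality {A A'} f := by
    dsimp
    have h2 := adj.counit.naturality (τ.map (F.map f))
    dsimp at h2
    rw [← Category.assoc, ← Functor.map_comp, chi_nat σ hσ τ hτ F G adj β f, Functor.map_comp,
      Category.assoc, h2, ← Category.assoc]

theorem chi_alpha (hβ : ∀ B : D,
      eqToHom (congrArg G.obj (sq_obj τ hτ B)).symm ≫ β.app (τ.obj B) ≫ σ.map (β.app B) ≫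
        eqToHom (sq_obj σ hσ (G.obj B)) = 𝟙 (G.obj B)) (A : C) :
    chi σ hσ τ hτ F G adj β (σ.obj A) ≫
        G.map (τ.map ((alphaOf σ hσ τ hτ F G adj β).app A)) =
      eqToHom (sq_obj σ hσ A) ≫ adj.unit.app A ≫
        eqToHom (congrArg G.obj (sq_obj τ hτ (F.obj A)).symm) := by
  dsimp only [chi]
  rw [Category.assoc, ← tilde_nat σ hσ τ hτ G β (B := F.obj (σ.obj A)) (B' := τ.obj (F.obj A))
    ((alphaOf σ hσ τ hτ F G adj β).app A)]
  -- σ η_{σA} ≫ σG(α_A) ≫ tilde (τFA)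
  have h6 : adj.unit.app (σ.obj A) ≫ G.map ((alphaOf σ hσ τ hτ F G adj β).app A) =
      chi σ hσ τ hτ F G adj β A := by
    dsimp only [alphaOf]
    rw [Functor.map_comp, ← Category.assoc]
    have h1 := adj.unit.naturality (chi σ hσ τ hτ F G adj β A)
    dsimp at h1
    rw [← h1, Category.assoc, adj.right_triangle_components, Category.comp_id]
  rw [← Category.assoc, ← Functor.map_comp, h6]
  rw [show chi σ hσ τ hτ F G adj β A =
    σ.map (adj.unit.app A) ≫ tilde σ hσ τ hτ G β (F.obj A) from rfl]
  rw [show tilde σ hσ τ hτ G β (F.obj A) =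
    eqToHom (congrArg σ.obj (congrArg G.obj (sq_obj τ hτ (F.obj A)).symm)) ≫
      σ.map (β.app (τ.obj (F.obj A))) ≫
        eqToHom (sq_obj σ hσ (G.obj (τ.obj (F.obj A)))) from rfl]
  rw [Functor.map_comp σ, Functor.map_comp σ, Functor.map_comp σ, eqToHom_map, eqToHom_map,
    mapmap σ hσ (β.app (τ.obj (F.obj A))), mapmap σ hσ (adj.unit.app A)]
  simp only [Category.assoc, eqToHom_trans_assoc, eqToHom_refl, Category.id_comp]
  slice_lhs 4 5 => rw [beta_tilde σ hσ τ hτ G β hβ (τ.obj (F.obj A))]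
  simp

theorem alpha_cond (hβ : ∀ B : D,
      eqToHom (congrArg G.obj (sq_obj τ hτ B)).symm ≫ β.app (τ.obj B) ≫ σ.map (β.app B) ≫
        eqToHom (sq_obj σ hσ (G.obj B)) = 𝟙 (G.obj B)) (A : C) :
    eqToHom (congrArg F.obj (sq_obj σ hσ A)).symm ≫
        (alphaOf σ hσ τ hτ F G adj β).app (σ.obj A) ≫
        τ.map ((alphaOf σ hσ τ hτ F G adj β).app A) ≫ eqToHom (sq_obj τ hτ (F.obj A)) =
      𝟙 (F.obj A) := by
  have pair : (alphaOf σ hσ τ hτ F G adj β).app (σ.obj A) ≫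
      τ.map ((alphaOf σ hσ τ hτ F G adj β).app A) =
      eqToHom (congrArg F.obj (sq_obj σ hσ A)) ≫ eqToHom (sq_obj τ hτ (F.obj A)).symm := by
    rw [show (alphaOf σ hσ τ hτ F G adj β).app (σ.obj A) =
      F.map (chi σ hσ τ hτ F G adj β (σ.obj A)) ≫
        adj.counit.app (τ.obj (F.obj (σ.obj A))) from rfl]
    have h2 := adj.counit.naturality (τ.map ((alphaOf σ hσ τ hτ F G adj β).app A))
    dsimp at h2
    rw [Category.assoc, ← h2, ← Category.assoc, ← Functor.map_comp,
      chi_alpha σ hσ τ hτ F G adj β hβ A]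
    rw [Functor.map_comp, Functor.map_comp, eqToHom_map, eqToHom_map]
    have h5 := adj.counit.naturality (eqToHom (sq_obj τ hτ (F.obj A)).symm)
    dsimp at h5
    simp only [eqToHom_map] at h5
    slice_lhs 3 4 => rw [h5]
    slice_lhs 2 3 => rw [adj.left_triangle_components]
    simp
  slice_lhs 2 3 => rw [pair]
  simp

end Bwd

end SkewTransfer

open SkewTest in
/-- **Statement 11.** For an adjunction `F ⊣ G` between categories with involution
`(C, σ)` and `(D, τ)`, there is a natural transformation `α : Fσ → τF` with
`τα ∘ ασ = id_F` if and only if there is a natural transformation `β : Gτ → σG` with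
`σβ ∘ βτ = id_G`. -/
theorem involutary_structure_transfers_along_adjunction {C : Type u} [Category.{v} C]
    {D : Type u₂} [Category.{v₂} D] (σ : C ⥤ C) (hσ : σ ⋙ σ = 𝟭 C)
    (τ : D ⥤ D) (hτ : τ ⋙ τ = 𝟭 D) (F : C ⥤ D) (G : D ⥤ C) (adj : F ⊣ G) :
    (∃ α : σ ⋙ F ⟶ F ⋙ τ, ∀ A : C,
        eqToHom (congrArg F.obj (sq_obj σ hσ A)).symm ≫ α.app (σ.obj A) ≫ τ.map (α.app A) ≫
          eqToHom (sq_obj τ hτ (F.obj A)) = 𝟙 (F.obj A)) ↔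
    (∃ β : τ ⋙ G ⟶ G ⋙ σ, ∀ B : D,
        eqToHom (congrArg G.obj (sq_obj τ hτ B)).symm ≫ β.app (τ.obj B) ≫ σ.map (β.app B) ≫
          eqToHom (sq_obj σ hσ (G.obj B)) = 𝟙 (G.obj B)) := by
  constructor
  · rintro ⟨α, hα⟩
    exact ⟨SkewTransfer.beta σ τ hτ F G adj α hσ, SkewTransfer.beta_cond σ τ hτ F G adj α hσ hα⟩
  · rintro ⟨β, hβ⟩
    exact ⟨SkewTransfer.alphaOf σ hσ τ hτ F G adj β,
      SkewTransfer.alpha_cond σ hσ τ hτ F G adj β hβ⟩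
end

section
/- Let V be a closed symmetric monoidal category, C a small V-enriched category, and F : C → V a V-functor (V regarded as enriched over itself via the closed structure). For objects c, d of C let ρ_{c,d} : F(c) ⊗ C(c, d) → F(d) denote the adjunct, under the closed structure, of the structure map C(c, d) → [F(c), F(d)]. Fix an object x of C and assume V has the coproducts ∐_{(c,d)} F(c) ⊗ C(c,d) ⊗ C(d,x) (over pairs of objects of C) and ∐_e F(e) ⊗ C(e,x) (over objects of C). Consider the two maps ∐_{(c,d)} F(c) ⊗ C(c,d) ⊗ C(d,x) ⇉ ∐_e F(e) ⊗ C(e,x): the first, given on the (c,d)-summand by id_{F(c)} ⊗ M_{c,d,x} (where M is the composition of C) followed by the coprojection of the summand e = c; the second, given on the (c,d)-summand by ρ_{c,d} ⊗ id_{C(d,x)} followed by the coprojection of the summand e = d. Then the map ∐_e F(e) ⊗ C(e, x) → F(x), given on the summand e by ρ_{e,x}, coequalizes this pair and exhibits F(x) as their coequalizer. In particular the coend ∫^{c} F(c) ⊗ C(c, x) exists and is isomorphic to F(x), naturally in x. -/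
open CategoryTheory CategoryTheory.Limits MonoidalCategory
open scoped CategoryTheory.MonoidalClosed

universe v u u₁

private lemma coYoneda_key (V : Type u) [Category.{v} V] [MonoidalCategory V]
    [SymmetricCategory V] [MonoidalClosed V]
    (C : Type u₁) [EnrichedCategory V C] (F : EnrichedFunctor V C V) (x c d : C) :
    (F.obj c ◁ eComp V c d x) ≫ MonoidalClosed.uncurry (F.map c x) =
    (α_ (F.obj c) (c ⟶[V] d) (d ⟶[V] x)).inv ≫
      (MonoidalClosed.uncurry (F.map c d) ▷ (d ⟶[V] x)) ≫
      MonoidalClosed.uncurry (F.map d x) := by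
  rw [← MonoidalClosed.uncurry_natural_left, F.map_comp]
  show MonoidalClosed.uncurry ((F.map c d ⊗ₘ F.map d x) ≫ MonoidalClosed.comp _ _ _) = _
  rw [MonoidalClosed.comp_eq, ← MonoidalClosed.curry_natural_left, MonoidalClosed.uncurry_curry,
    MonoidalClosed.compTranspose_eq]
  simp only [MonoidalClosed.uncurry_eq, MonoidalCategory.tensorHom_def]
  simp only [MonoidalCategory.whiskerLeft_comp, comp_whiskerRight, Category.assoc]
  dsimp only [MonoidalClosed.enrichedCategorySelf, EnrichedCategory.Hom]
  rw [associator_inv_naturality_right_assoc, whisker_exchange_assoc,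
    associator_inv_naturality_middle_assoc]
  rfl

private lemma coYoneda_sec (V : Type u) [Category.{v} V] [MonoidalCategory V]
    [SymmetricCategory V] [MonoidalClosed V]
    {A B Z : V} (H K : V) (u : A ⊗ H ⟶ B) (e : 𝟙_ V ⟶ K) (w : B ⊗ K ⟶ Z) :
    (A ◁ ((ρ_ H).inv ≫ (H ◁ e))) ≫ (α_ A H K).inv ≫ (u ▷ K) ≫ w =
      u ≫ (ρ_ B).inv ≫ (B ◁ e) ≫ w := by
  simp only [MonoidalCategory.whiskerLeft_comp, Category.assoc]
  rw [associator_inv_naturality_right_assoc, whisker_exchange_assoc,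
    MonoidalCategory.whiskerLeft_rightUnitor_inv, Category.assoc, Iso.hom_inv_id_assoc,
    ← rightUnitor_inv_naturality_assoc]

/-- **Statement 12** (enriched co-Yoneda).  Let `V` be a closed symmetric monoidal category,
`C` a small `V`-category and `F : C ⥤ V` a `V`-functor (`V` enriched in itself via the
closed structure), with `ρ_{c,d} : F c ⊗ C(c,d) ⟶ F d` the adjunct of the structure map.
Given the displayed coproducts, the map `∐_e F e ⊗ C(e,x) ⟶ F x` with components
`ρ_{e,x}` coequalizes the two canonical maps from `∐_{(c,d)} F c ⊗ C(c,d) ⊗ C(d,x)`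
(one via composition in `C`, one via the action `ρ` on `F`), and exhibits `F x` as their
coequalizer; in particular the coend `∫^c F c ⊗ C(c, x)` exists and is isomorphic to
`F x`. -/
theorem enriched_coYoneda (V : Type u) [Category.{v} V] [MonoidalCategory V]
    [SymmetricCategory V] [MonoidalClosed V]
    (C : Type u₁) [EnrichedCategory V C] (F : EnrichedFunctor V C V) (x : C)
    [HasCoproduct (fun p : C × C => F.obj p.1 ⊗ ((p.1 ⟶[V] p.2) ⊗ (p.2 ⟶[V] x)))]
    [HasCoproduct (fun e : C => F.obj e ⊗ (e ⟶[V] x))] :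
    ∃ hco :
      (Sigma.desc (fun p : C × C =>
          (F.obj p.1 ◁ eComp V p.1 p.2 x) ≫
            Sigma.ι (fun e : C => F.obj e ⊗ (e ⟶[V] x)) p.1)) ≫
        (Sigma.desc fun e : C => MonoidalClosed.uncurry (F.map e x)) =
      (Sigma.desc (fun p : C × C =>
          (α_ (F.obj p.1) (p.1 ⟶[V] p.2) (p.2 ⟶[V] x)).inv ≫
            (MonoidalClosed.uncurry (F.map p.1 p.2) ▷ (p.2 ⟶[V] x)) ≫
            Sigma.ι (fun e : C => F.obj e ⊗ (e ⟶[V] x)) p.2)) ≫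
        (Sigma.desc fun e : C => MonoidalClosed.uncurry (F.map e x)),
      Nonempty (IsColimit (Cofork.ofπ
        (Sigma.desc fun e : C => MonoidalClosed.uncurry (F.map e x)) hco)) := by
  set π : (∐ fun e : C => F.obj e ⊗ (e ⟶[V] x)) ⟶ F.obj x :=
    Sigma.desc fun e : C => MonoidalClosed.uncurry (F.map e x) with hπ
  have hco : (Sigma.desc (fun p : C × C =>
          (F.obj p.1 ◁ eComp V p.1 p.2 x) ≫
            Sigma.ι (fun e : C => F.obj e ⊗ (e ⟶[V] x)) p.1)) ≫ π =
      (Sigma.desc (fun p : C × C =>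
          (α_ (F.obj p.1) (p.1 ⟶[V] p.2) (p.2 ⟶[V] x)).inv ≫
            (MonoidalClosed.uncurry (F.map p.1 p.2) ▷ (p.2 ⟶[V] x)) ≫
            Sigma.ι (fun e : C => F.obj e ⊗ (e ⟶[V] x)) p.2)) ≫ π := by
    apply Sigma.hom_ext
    intro p
    simp only [hπ, colimit.ι_desc_assoc, Cofan.mk_ι_app, Category.assoc, colimit.ι_desc]
    exact coYoneda_key V C F x p.1 p.2
  refine ⟨hco, ⟨?_⟩⟩
  -- the splitting
  set sSec : F.obj x ⟶ (∐ fun e : C => F.obj e ⊗ (e ⟶[V] x)) :=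
    (ρ_ (F.obj x)).inv ≫ (F.obj x ◁ eId V x) ≫
      Sigma.ι (fun e : C => F.obj e ⊗ (e ⟶[V] x)) x with hs
  set tSec : (∐ fun e : C => F.obj e ⊗ (e ⟶[V] x)) ⟶
      (∐ fun p : C × C => F.obj p.1 ⊗ ((p.1 ⟶[V] p.2) ⊗ (p.2 ⟶[V] x))) :=
    Sigma.desc (fun e : C =>
      (F.obj e ◁ ((ρ_ (e ⟶[V] x)).inv ≫ ((e ⟶[V] x) ◁ eId V x))) ≫
        Sigma.ι (fun p : C × C => F.obj p.1 ⊗ ((p.1 ⟶[V] p.2) ⊗ (p.2 ⟶[V] x))) (e, x)) with ht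
  have h1 : sSec ≫ π = 𝟙 (F.obj x) := by
    simp only [hs, hπ, Category.assoc, colimit.ι_desc, Cofan.mk_ι_app]
    rw [← MonoidalClosed.uncurry_natural_left, F.map_id]
    show (ρ_ (F.obj x)).inv ≫ MonoidalClosed.uncurry (MonoidalClosed.id (F.obj x)) = _
    rw [MonoidalClosed.id_eq, MonoidalClosed.uncurry_curry]
    simp
  have h2 : tSec ≫ (Sigma.desc (fun p : C × C =>
          (F.obj p.1 ◁ eComp V p.1 p.2 x) ≫
            Sigma.ι (fun e : C => F.obj e ⊗ (e ⟶[V] x)) p.1)) = 𝟙 _ := by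
    apply Sigma.hom_ext
    intro e
    simp only [ht, colimit.ι_desc_assoc, Cofan.mk_ι_app, Category.assoc, colimit.ι_desc,
      Category.comp_id]
    rw [← MonoidalCategory.whiskerLeft_comp_assoc, Category.assoc, e_comp_id V e x]
    simp
  have h3 : tSec ≫ (Sigma.desc (fun p : C × C =>
          (α_ (F.obj p.1) (p.1 ⟶[V] p.2) (p.2 ⟶[V] x)).inv ≫
            (MonoidalClosed.uncurry (F.map p.1 p.2) ▷ (p.2 ⟶[V] x)) ≫
            Sigma.ι (fun e : C => F.obj e ⊗ (e ⟶[V] x)) p.2)) = π ≫ sSec := by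
    apply Sigma.hom_ext
    intro e
    simp only [ht, hs, hπ, colimit.ι_desc_assoc, Cofan.mk_ι_app, Category.assoc,
      colimit.ι_desc]
    exact coYoneda_sec V (e ⟶[V] x) (x ⟶[V] x) (MonoidalClosed.uncurry (F.map e x)) (eId V x) _
  refine Cofork.IsColimit.mk _ (fun s => sSec ≫ s.π) (fun s => ?_) (fun s m hm => ?_)
  · show π ≫ sSec ≫ s.π = s.π
    calc π ≫ sSec ≫ s.π = tSec ≫ (Sigma.desc (fun p : C × C =>
          (α_ (F.obj p.1) (p.1 ⟶[V] p.2) (p.2 ⟶[V] x)).inv ≫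
            (MonoidalClosed.uncurry (F.map p.1 p.2) ▷ (p.2 ⟶[V] x)) ≫
            Sigma.ι (fun e : C => F.obj e ⊗ (e ⟶[V] x)) p.2)) ≫ s.π := by
            rw [← Category.assoc, ← h3, Category.assoc]
      _ = tSec ≫ (Sigma.desc (fun p : C × C =>
          (F.obj p.1 ◁ eComp V p.1 p.2 x) ≫
            Sigma.ι (fun e : C => F.obj e ⊗ (e ⟶[V] x)) p.1)) ≫ s.π := by
            rw [← s.condition]
      _ = s.π := by rw [← Category.assoc, h2, Category.id_comp]
  · show m = sSec ≫ s.π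
    rw [← hm, ← Category.assoc]
    have heq : sSec ≫ (Cofork.ofπ π hco).π = 𝟙 (F.obj x) := h1
    rw [heq, Category.id_comp]
end
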